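/- (The secondary value of a 3×3 matrix lies in the numerical range) Let A be the 3×3 upper triangular complex matrix with diagonal entries λ₁, λ₂, λ₃ and strictly upper entries b₁ = A₁₂, b₂ = A₁₃, c₁ = A₂₃, and assume t₁ := |b₁|² + |b₂|² + |c₁|² ≠ 0. Set t₂ := |b₁|²(λ₁+λ₂) + |b₂|²(λ₁+λ₃) + |c₁|²(λ₂+λ₃) + conj(b₂)·b₁·c₁ and χ := (λ₁+λ₂+λ₃) − t₂/t₁. Then, with the column vector w := (conj(c₁), −conj(b₂), conj(b₁)) (which is nonzero), χ = (wᴴAw)/(wᴴw); in particular χ ∈ W(A) := { (uᴴAu)/(uᴴu) : u ∈ ℂ³, u ≠ 0 }. -/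

import Mathlib

open Matrix Complex ComplexConjugate

/-- The secondary value of a 3×3 matrix lies in the numerical range: for the upper triangular
matrix `A = !![λ₁,b₁,b₂; 0,λ₂,c₁; 0,0,λ₃]` with `t₁ = |b₁|²+|b₂|²+|c₁|² ≠ 0` and secondary value
`χ = (λ₁+λ₂+λ₃) − t₂/t₁`, the nonzero vector `w = (conj c₁, −conj b₂, conj b₁)` satisfies
`χ = (wᴴAw)/(wᴴw)`; in particular `χ ∈ W(A)`. -/
theorem secondary_value_in_numerical_range_three (lam₁ lam₂ lam₃ b₁ b₂ c₁ : ℂ)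
    (A : Matrix (Fin 3) (Fin 3) ℂ)
    (hA : A = !![lam₁, b₁, b₂; 0, lam₂, c₁; 0, 0, lam₃])
    (t₁ : ℝ)
    (ht₁ : t₁ = ‖b₁‖ ^ 2 + ‖b₂‖ ^ 2 + ‖c₁‖ ^ 2)
    (ht₁ne : t₁ ≠ 0)
    (t₂ : ℂ)
    (ht₂ : t₂ = (‖b₁‖ ^ 2 : ℝ) * (lam₁ + lam₂) +
      (‖b₂‖ ^ 2 : ℝ) * (lam₁ + lam₃) +
      (‖c₁‖ ^ 2 : ℝ) * (lam₂ + lam₃) + conj b₂ * b₁ * c₁)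
    (χ : ℂ) (hχ : χ = lam₁ + lam₂ + lam₃ - t₂ / (t₁ : ℂ))
    (w : Fin 3 → ℂ) (hw : w = ![conj c₁, -conj b₂, conj b₁]) :
    w ≠ 0 ∧
    χ = (star w ⬝ᵥ A.mulVec w) / (star w ⬝ᵥ w) ∧
    χ ∈ {z : ℂ | ∃ u : Fin 3 → ℂ, u ≠ 0 ∧ z = (star u ⬝ᵥ A.mulVec u) / (star u ⬝ᵥ u)} := by
  have ht₁c : (t₁ : ℂ) ≠ 0 := by exact_mod_cast ht₁ne
  have hb1 : ((‖b₁‖ : ℝ) : ℂ) ^ 2 = b₁ * conj b₁ := by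
    rw [← Complex.ofReal_pow, Complex.sq_norm, Complex.mul_conj]
  have hb2 : ((‖b₂‖ : ℝ) : ℂ) ^ 2 = b₂ * conj b₂ := by
    rw [← Complex.ofReal_pow, Complex.sq_norm, Complex.mul_conj]
  have hc1 : ((‖c₁‖ : ℝ) : ℂ) ^ 2 = c₁ * conj c₁ := by
    rw [← Complex.ofReal_pow, Complex.sq_norm, Complex.mul_conj]
  have hdot : star w ⬝ᵥ w = (t₁ : ℂ) := by
    subst hw
    simp only [dotProduct, Fin.sum_univ_three, Pi.star_apply, RCLike.star_def,
      Matrix.cons_val_zero, Matrix.cons_val_one, Matrix.head_cons, Matrix.cons_val_two,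
      Matrix.tail_cons, map_neg, Complex.conj_conj, ht₁]
    push_cast
    rw [hb1, hb2, hc1]
    ring
  have hne : w ≠ 0 := by
    intro h
    rw [h] at hdot
    simp at hdot
    exact ht₁c hdot.symm
  have hnum : star w ⬝ᵥ A.mulVec w = χ * (t₁ : ℂ) := by
    subst hw hA ht₂
    rw [hχ, sub_mul, div_mul_cancel₀ _ ht₁c]
    simp [dotProduct, mulVec, Fin.sum_univ_three, Matrix.vecHead, Matrix.vecTail, ht₁]
    rw [hb1, hb2, hc1]
    ring
  have key : χ = (star w ⬝ᵥ A.mulVec w) / (star w ⬝ᵥ w) := by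
    rw [hnum, hdot, mul_div_assoc, div_self ht₁c, mul_one]
  exact ⟨hne, key, ⟨w, hne, key⟩⟩
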